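/- Let H be the two-parameter group acting on ℝ³ by (s,t)·v = (cos(s) v₁ − sin(s) v₂, sin(s) v₁ + cos(s) v₂, e^t v₃), i.e., rotation in the first two coordinates and dilation in the third. Let 𝒪₂ = {v ∈ ℝ³ : v₁² + v₂² ≠ 0 and v₃ ≠ 0}. Then the orbit space 𝒪₂/H contains no nonempty compact open subset. -/
import Mathlib


open Set Topology
open scoped Real

noncomputable section

/-- The action of `(s,t) ∈ ℝ²` on `ℝ³`: rotation by `s` in the first two coordinates and
dilation by `e^t` in the third. -/
def act (p : ℝ × ℝ) (v : Fin 3 → ℝ) : Fin 3 → ℝ :=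
  ![Real.cos p.1 * v 0 - Real.sin p.1 * v 1,
    Real.sin p.1 * v 0 + Real.cos p.1 * v 1,
    Real.exp p.2 * v 2]

/-- `𝒪₂ = {v ∈ ℝ³ : v₁² + v₂² ≠ 0 and v₃ ≠ 0}`. -/
def O2 : Set (Fin 3 → ℝ) := {v | v 0 ^ 2 + v 1 ^ 2 ≠ 0 ∧ v 2 ≠ 0}

/-- The orbit equivalence relation on `𝒪₂`; `Quot orbitRel` is the orbit space `𝒪₂/H`
with the quotient topology. -/
def orbitRel (x y : ↥O2) : Prop :=
  ∃ p : ℝ × ℝ, act p (x : Fin 3 → ℝ) = (y : Fin 3 → ℝ)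

/-- The invariant `v ↦ v₀² + v₁²`. -/
def fmap (v : Fin 3 → ℝ) : ℝ := v 0 ^ 2 + v 1 ^ 2

lemma fmap_invariant : ∀ x y : ↥O2, orbitRel x y →
    fmap (x : Fin 3 → ℝ) = fmap (y : Fin 3 → ℝ) := by
  rintro x y ⟨p, hp⟩
  have h0 := congrFun hp 0
  have h1 := congrFun hp 1
  simp only [act, Matrix.cons_val_zero, Matrix.cons_val_one, Matrix.head_cons] at h0 h1
  unfold fmap
  rw [← h0, ← h1]
  linear_combination (-(x : Fin 3 → ℝ) 0 ^ 2 - (x : Fin 3 → ℝ) 1 ^ 2) *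
    Real.sin_sq_add_cos_sq p.1

lemma isOpen_O2 : IsOpen O2 := by
  have h : O2 = (fun v : Fin 3 → ℝ => v 0 ^ 2 + v 1 ^ 2) ⁻¹' {(0:ℝ)}ᶜ ∩
      (fun v : Fin 3 → ℝ => v 2) ⁻¹' {(0:ℝ)}ᶜ := by
    ext v; simp [O2]
  rw [h]
  exact (isOpen_compl_singleton.preimage (by fun_prop)).inter
    (isOpen_compl_singleton.preimage (continuous_apply 2))

lemma isOpen_image_fmap {U : Set (Fin 3 → ℝ)} (hU : IsOpen U) (hUO : U ⊆ O2) :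
    IsOpen (fmap '' U) := by
  rw [isOpen_iff_mem_nhds]
  rintro c ⟨v, hvU, rfl⟩
  have hv2 : (0:ℝ) < fmap v := lt_of_le_of_ne (by unfold fmap; positivity) (Ne.symm (hUO hvU).1)
  set c := fmap v with hc
  set φ : ℝ → (Fin 3 → ℝ) :=
    fun y i => if i = 2 then v 2 else Real.sqrt (y / c) * v i with hφ
  have hφc : φ c = v := by
    funext i
    by_cases h : i = 2 <;>
      simp [hφ, h, div_self (ne_of_gt hv2)]
  have hcont : Continuous φ := by
    refine continuous_pi fun i => ?_
    by_cases h : i = 2 <;> simp only [hφ, h, if_true, if_false] <;> fun_prop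
  refine mem_nhds_iff.mpr ⟨φ ⁻¹' U ∩ Ioi 0, ?_, (hU.preimage hcont).inter isOpen_Ioi,
    ⟨by simpa [hφc] using hvU, hv2⟩⟩
  rintro y ⟨hyU, hy0⟩
  refine ⟨φ y, hyU, ?_⟩
  have hsq : Real.sqrt (y / c) ^ 2 = y / c := Real.sq_sqrt (le_of_lt (div_pos hy0 hv2))
  show fmap (φ y) = y
  have e0 : φ y 0 = Real.sqrt (y / c) * v 0 := by simp [hφ]
  have e1 : φ y 1 = Real.sqrt (y / c) * v 1 := by simp [hφ]
  rw [fmap, e0, e1, mul_pow, mul_pow, hsq, ← mul_add]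
  show y / c * c = y
  exact div_mul_cancel₀ y (ne_of_gt hv2)

/-- For the rotation-dilation group `H = SO(2) × {e^t}` acting on
`ℝ³`, the orbit space `𝒪₂/H` contains no nonempty compact open subset. -/
theorem no_compact_open_rotation_case :
    ¬ ∃ K : Set (Quot orbitRel), K.Nonempty ∧ IsCompact K ∧ IsOpen K := by
  rintro ⟨K, hKne, hKc, hKo⟩
  set q : ↥O2 → Quot orbitRel := Quot.mk _ with hq
  have hqcont : Continuous q := continuous_quot_mk
  set g : Quot orbitRel → ℝ := Quot.lift (fun x : ↥O2 => fmap (x : Fin 3 → ℝ))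
    fmap_invariant with hg
  have hgcont : Continuous g := by
    apply continuous_quot_lift
    have : Continuous fmap := by unfold fmap; fun_prop
    exact this.comp continuous_subtype_val
  set U : Set ↥O2 := q ⁻¹' K with hUdef
  have hUopen : IsOpen U := hKo.preimage hqcont
  set U' : Set (Fin 3 → ℝ) := Subtype.val '' U with hU'def
  have hU'open : IsOpen U' := isOpen_O2.isOpenMap_subtype_val U hUopen
  have hU'sub : U' ⊆ O2 := by rintro x ⟨y, _, rfl⟩; exact y.2
  have hCeq : g '' K = fmap '' U' := by
    have hKs : K = q '' U := (Set.image_preimage_eq K (Quot.mk_surjective)).symm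
    rw [hKs, hU'def, Set.image_image, Set.image_image]
  have hCopen : IsOpen (g '' K) := hCeq ▸ isOpen_image_fmap hU'open hU'sub
  have hCcompact : IsCompact (g '' K) := hKc.image hgcont
  have hCne : (g '' K).Nonempty := hKne.image g
  have hclopen : IsClopen (g '' K) := ⟨hCcompact.isClosed, hCopen⟩
  have huniv : g '' K = Set.univ := hclopen.eq_univ hCne
  exact noncompact_univ ℝ (huniv ▸ hCcompact)
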